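/- Fix n ∈ ℕ and a tetra-closed set G of triples of Fin n. Let v be a vertex and let x_0, x_1, ..., x_s (s ≥ 1) be pairwise distinct vertices, all distinct from v, such that {v, x_i, x_{i+1}} ∈ G for all 0 ≤ i ≤ s−1 and {x_i, x_{i+1}, x_s} ∈ G for all 0 ≤ i ≤ s−2. Then {v, x_0, x_s} ∈ G. -/
import Mathlib


/-- A set `G` of triples of `Fin n` is tetra-closed if for every 4-element
subset `s` of `Fin n`, whenever three of the four 3-element subsets of `s`
belong to `G`, so does the fourth. -/
def TetraClosed {n : ℕ} (G : Finset (Finset (Fin n))) : Prop :=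
  ∀ s : Finset (Fin n), s.card = 4 →
    ∀ f ∈ s.powersetCard 3, (∀ g ∈ s.powersetCard 3, g ≠ f → g ∈ G) → f ∈ G

lemma tetra_apply {n : ℕ} {G : Finset (Finset (Fin n))} (hG : TetraClosed G)
    {a b c d : Fin n} (hab : a ≠ b) (hac : a ≠ c) (had : a ≠ d)
    (hbc : b ≠ c) (hbd : b ≠ d) (hcd : c ≠ d)
    (h1 : ({a, b, c} : Finset (Fin n)) ∈ G)
    (h2 : ({a, c, d} : Finset (Fin n)) ∈ G)
    (h3 : ({b, c, d} : Finset (Fin n)) ∈ G) :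
    ({a, b, d} : Finset (Fin n)) ∈ G := by
  have hcard : ({a, b, c, d} : Finset (Fin n)).card = 4 := by
    rw [Finset.card_insert_of_notMem (by simp [hab, hac, had]),
        Finset.card_insert_of_notMem (by simp [hbc, hbd]),
        Finset.card_insert_of_notMem (by simp [hcd])]
    simp
  apply hG _ hcard
  · rw [Finset.mem_powersetCard]
    constructor
    · intro y hy; simp only [Finset.mem_insert, Finset.mem_singleton] at hy ⊢; tauto
    · rw [Finset.card_insert_of_notMem (by simp [hab, had]),
          Finset.card_insert_of_notMem (by simp [hbd])]
      simp
  · intro g hg hne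
    rw [Finset.mem_powersetCard] at hg
    obtain ⟨hsub, hc3⟩ := hg
    have hdiff : (({a, b, c, d} : Finset (Fin n)) \ g).card = 1 := by
      rw [Finset.card_sdiff_of_subset hsub, hcard, hc3]
    obtain ⟨e, he⟩ := Finset.card_eq_one.mp hdiff
    have hgeq : g = ({a, b, c, d} : Finset (Fin n)).erase e := by
      have := Finset.sdiff_sdiff_eq_self hsub
      rw [he] at this
      rw [← this, Finset.sdiff_singleton_eq_erase]
    have hemem : e ∈ ({a, b, c, d} : Finset (Fin n)) := by
      have : e ∈ ({a, b, c, d} : Finset (Fin n)) \ g := by rw [he]; simp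
      exact (Finset.mem_sdiff.mp this).1
    simp only [Finset.mem_insert, Finset.mem_singleton] at hemem
    rcases hemem with rfl | rfl | rfl | rfl
    · -- g = erase a = {b,c,d}
      have : g = ({b, c, d} : Finset (Fin n)) := by
        rw [hgeq]; ext y
        simp only [Finset.mem_erase, Finset.mem_insert, Finset.mem_singleton]
        constructor
        · rintro ⟨hy, rfl | h⟩ <;> tauto
        · rintro (rfl | rfl | rfl) <;> exact ⟨by tauto, by tauto⟩
      rw [this]; exact h3
    · have : g = ({a, c, d} : Finset (Fin n)) := by
        rw [hgeq]; ext y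
        simp only [Finset.mem_erase, Finset.mem_insert, Finset.mem_singleton]
        constructor
        · rintro ⟨hy, h⟩; tauto
        · rintro (rfl | rfl | rfl) <;> exact ⟨by tauto, by tauto⟩
      rw [this]; exact h2
    · have : g = ({a, b, d} : Finset (Fin n)) := by
        rw [hgeq]; ext y
        simp only [Finset.mem_erase, Finset.mem_insert, Finset.mem_singleton]
        constructor
        · rintro ⟨hy, h⟩; tauto
        · rintro (rfl | rfl | rfl) <;> exact ⟨by tauto, by tauto⟩
      exact absurd this hne
    · have : g = ({a, b, c} : Finset (Fin n)) := by
        rw [hgeq]; ext y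
        simp only [Finset.mem_erase, Finset.mem_insert, Finset.mem_singleton]
        constructor
        · rintro ⟨hy, h⟩; tauto
        · rintro (rfl | rfl | rfl) <;> exact ⟨by tauto, by tauto⟩
      rw [this]; exact h1

/-- Triangulation along a path (Figure 2 in the proof of Lemma 3.8): if `G`
is tetra-closed, `v, x₀, x₁, …, x_s` (with `s ≥ 1`) are pairwise distinct
vertices, `{v, xᵢ, xᵢ₊₁} ∈ G` for all `0 ≤ i ≤ s − 1` and
`{xᵢ, xᵢ₊₁, x_s} ∈ G` for all `0 ≤ i ≤ s − 2`, then `{v, x₀, x_s} ∈ G`. -/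
theorem triangulation_along_path (n s : ℕ) (G : Finset (Finset (Fin n)))
    (hGtriples : ∀ f ∈ G, f.card = 3) (hG : TetraClosed G) (hs : 1 ≤ s)
    (v : Fin n) (x : ℕ → Fin n)
    (hinj : ∀ i ≤ s, ∀ j ≤ s, x i = x j → i = j)
    (hv : ∀ i ≤ s, x i ≠ v)
    (hpath : ∀ i, i + 1 ≤ s → ({v, x i, x (i + 1)} : Finset (Fin n)) ∈ G)
    (htri : ∀ i, i + 2 ≤ s → ({x i, x (i + 1), x s} : Finset (Fin n)) ∈ G) :
    ({v, x 0, x s} : Finset (Fin n)) ∈ G := by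
  have key : ∀ k, k + 1 ≤ s → ({v, x (s - 1 - k), x s} : Finset (Fin n)) ∈ G := by
    intro k
    induction k with
    | zero =>
      intro hk
      have h : s - 1 - 0 + 1 = s := by omega
      have := hpath (s - 1 - 0) (by omega)
      rwa [h] at this
    | succ k ih =>
      intro hk
      set i := s - 1 - (k + 1) with hi
      have hik : s - 1 - k = i + 1 := by omega
      have ihm : ({v, x (i + 1), x s} : Finset (Fin n)) ∈ G := by
        have := ih (by omega); rwa [hik] at this
      have h1 : ({v, x i, x (i + 1)} : Finset (Fin n)) ∈ G := hpath i (by omega)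
      have h3 : ({x i, x (i + 1), x s} : Finset (Fin n)) ∈ G := htri i (by omega)
      have hi1 : i + 1 ≤ s := by omega
      have his : i ≤ s := by omega
      have hvxi : v ≠ x i := fun h => hv i his h.symm
      have hvxi1 : v ≠ x (i + 1) := fun h => hv (i + 1) hi1 h.symm
      have hvxs : v ≠ x s := fun h => hv s le_rfl h.symm
      have hxii1 : x i ≠ x (i + 1) := fun h => by
        have := hinj i his (i + 1) hi1 h; omega
      have hxis : x i ≠ x s := fun h => by
        have := hinj i his s le_rfl h; omega
      have hxi1s : x (i + 1) ≠ x s := fun h => by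
        have := hinj (i + 1) hi1 s le_rfl h; omega
      exact tetra_apply hG hvxi hvxi1 hvxs hxii1 hxis hxi1s h1 ihm h3
  have := key (s - 1) (by omega)
  have h0 : s - 1 - (s - 1) = 0 := by omega
  rwa [h0] at this
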